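/- Let R be a local ring which is right max-QF (every injective right R-module is max-projective). Then R is either right self-injective or right small. -/
import Mathlib


universe u v

/-- A module `M` is *max-projective* if every homomorphism `M → R/I`, for `I` a
maximal right ideal of `R`, factors through the canonical projection `R → R/I`. -/
def MaxProjective (R : Type u) [Ring R] (M : Type v) [AddCommGroup M] [Module R M] : Prop :=
  ∀ I : Submodule R R, IsCoatom I → ∀ g : M →ₗ[R] R ⧸ I,
    ∃ h : M →ₗ[R] R, I.mkQ.comp h = g

/-- A submodule `N ≤ M` is *essential* if it meets every nonzero submodule
nontrivially. -/
def IsEssential {R : Type u} [Ring R] {M : Type v} [AddCommGroup M] [Module R M]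
    (N : Submodule R M) : Prop :=
  ∀ K : Submodule R M, N ⊓ K = ⊥ → K = ⊥

/-- A submodule `N ≤ M` is *superfluous* (small) if `N + L = M` forces `L = M`. -/
def IsSuperfluous {R : Type u} [Ring R] {M : Type v} [AddCommGroup M] [Module R M]
    (N : Submodule R M) : Prop :=
  ∀ K : Submodule R M, N ⊔ K = ⊤ → K = ⊤

lemma myIsUnit_of_mul_eq_one {R : Type*} [Ring R] [IsLocalRing R] {x y : R}
    (h : y * x = 1) : IsUnit x := by
  have hid : (x * y) * (x * y) = x * y := by
    rw [mul_assoc, ← mul_assoc y, h, one_mul]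
  rcases IsLocalRing.isUnit_or_isUnit_of_add_one
      (a := x * y) (b := 1 - x * y) (by abel) with hu | hu
  · have h1 : x * y = 1 := hu.mul_left_cancel (by rw [hid, mul_one])
    exact ⟨⟨x, y, h1, h⟩, rfl⟩
  · have h0 : x * y = 0 := hu.mul_left_cancel (by rw [sub_mul, one_mul, hid, sub_self, mul_zero])
    have hx0 : x = 0 := by
      have := congrArg (· * x) h0
      simpa [mul_assoc, h] using this
    exfalso
    rw [hx0, mul_zero] at h
    exact zero_ne_one h

lemma myIsUnit_of_not_mem_coatom {R : Type*} [Ring R] [IsLocalRing R]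
    {I : Submodule R R} (hI : IsCoatom I) {x : R} (hx : x ∉ I) : IsUnit x := by
  have hlt : I < I ⊔ Submodule.span R {x} := by
    refine lt_of_le_of_ne le_sup_left fun hEq => hx ?_
    have : x ∈ I ⊔ Submodule.span R {x} :=
      Submodule.mem_sup_right (Submodule.mem_span_singleton_self x)
    rwa [← hEq] at this
  have htop := hI.2 _ hlt
  have h1 : (1 : R) ∈ I ⊔ Submodule.span R {x} := htop ▸ Submodule.mem_top
  rcases Submodule.mem_sup.1 h1 with ⟨m, hm, z, hz, hmz⟩
  rcases Submodule.mem_span_singleton.1 hz with ⟨r, rfl⟩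
  have hmnu : ¬ IsUnit m := fun hum => hI.1 (by
    rw [Submodule.eq_top_iff']
    intro t
    rcases hum with ⟨v, rfl⟩
    have : (t * (↑v⁻¹ : R)) • (v : R) ∈ I := Submodule.smul_mem I _ hm
    simpa [smul_eq_mul, mul_assoc] using this)
  rcases IsLocalRing.isUnit_or_isUnit_of_add_one hmz with hu | hu
  · exact absurd hu hmnu
  · rcases hu with ⟨v, hv⟩
    refine myIsUnit_of_mul_eq_one (y := (↑v⁻¹ : R) * r) ?_
    simp only [smul_eq_mul] at hv
    rw [mul_assoc, ← hv]
    exact v.inv_mul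

/-- A local right max-QF ring is either right self-injective or right small
(i.e. `R` is superfluous in its injective hull). -/
theorem local_maxQF_selfInjective_or_small (R : Type u) [Ring R] [IsLocalRing R]
    (hQF : ∀ (E : Type u) [AddCommGroup E] [Module R E], Module.Injective R E →
      MaxProjective R E) :
    Module.Injective R R ∨
      ∀ (E : Type u) [AddCommGroup E] [Module R E], Module.Injective R E →
        ∀ emb : R →ₗ[R] E, Function.Injective emb →
          IsEssential (LinearMap.range emb) → IsSuperfluous (LinearMap.range emb) := by
  rw [or_iff_not_imp_right]
  intro hns
  simp only [IsSuperfluous, not_forall] at hns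
  obtain ⟨E, _, _, hE, emb, hinj, hess, K, hsup, hKne⟩ := hns
  -- the map `s : R → E ⧸ K` is surjective
  set s : R →ₗ[R] E ⧸ K := K.mkQ.comp emb with hs
  have hssurj : Function.Surjective s := by
    intro q
    obtain ⟨e, rfl⟩ := K.mkQ_surjective q
    have he : e ∈ LinearMap.range emb ⊔ K := hsup ▸ Submodule.mem_top
    rcases Submodule.mem_sup.1 he with ⟨a, ⟨r, rfl⟩, k, hk, rfl⟩
    refine ⟨r, ?_⟩
    simp [s, Submodule.Quotient.mk_add, (Submodule.Quotient.mk_eq_zero K).2 hk]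
  -- its kernel is a proper ideal
  have hNne : LinearMap.ker s ≠ ⊤ := by
    intro hN
    apply hKne
    have h1 : emb 1 ∈ K := by
      have : (1 : R) ∈ LinearMap.ker s := hN ▸ Submodule.mem_top
      simpa [s, Submodule.Quotient.mk_eq_zero] using this
    have hle : LinearMap.range emb ≤ K := by
      rintro _ ⟨r, rfl⟩
      have : emb r = r • emb 1 := by
        rw [← map_smul, smul_eq_mul, mul_one]
      rw [this]
      exact K.smul_mem r h1
    rwa [sup_eq_right.2 hle] at hsup
  obtain ⟨I, hImax, hNI⟩ := Ideal.exists_le_maximal _ hNne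
  have hIco : IsCoatom (I : Submodule R R) := hImax.out
  -- build `g : E → R ⧸ I`
  let e1 : (R ⧸ LinearMap.ker s) ≃ₗ[R] (E ⧸ K) := s.quotKerEquivOfSurjective hssurj
  let g : E →ₗ[R] R ⧸ (I : Submodule R R) :=
    (Submodule.mapQ (LinearMap.ker s) I LinearMap.id hNI).comp
      (e1.symm.toLinearMap.comp K.mkQ)
  obtain ⟨h, hh⟩ := hQF E hE I hIco g
  -- `h (emb 1)` is a unit
  have hg1 : g (emb 1) = Submodule.Quotient.mk (1 : R) := by
    have he1 : e1 (Submodule.Quotient.mk (1 : R)) = K.mkQ (emb 1) := by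
      simp [e1, LinearMap.quotKerEquivOfSurjective, s]
    have : e1.symm (K.mkQ (emb 1)) = Submodule.Quotient.mk (1 : R) := by
      rw [← he1, LinearEquiv.symm_apply_apply]
    simp only [g, LinearMap.comp_apply, LinearEquiv.coe_coe, this]
    simp [Submodule.mapQ_apply]
  have hu1 : h (emb 1) ∉ (I : Submodule R R) := by
    intro hmem
    have h1 : I.mkQ (h (emb 1)) = Submodule.Quotient.mk (1 : R) := by
      have := congrArg (fun f => f (emb 1)) hh
      simpa [g] using this.trans hg1
    rw [Submodule.mkQ_apply, (Submodule.Quotient.mk_eq_zero _).2 hmem] at h1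
    have : (1 : R) ∈ (I : Submodule R R) := (Submodule.Quotient.mk_eq_zero _).1 h1.symm
    exact hImax.ne_top (Ideal.eq_top_iff_one I |>.2 this)
  have hu : IsUnit (h (emb 1)) := myIsUnit_of_not_mem_coatom hIco hu1
  rcases hu with ⟨u, hu⟩
  have hembr : ∀ r : R, emb r = r • emb 1 := fun r => by
    rw [← map_smul, smul_eq_mul, mul_one]
  -- kernel of h is trivial
  have hker : LinearMap.ker h = ⊥ := by
    apply hess
    rw [eq_bot_iff]
    rintro x ⟨⟨r, rfl⟩, hx2⟩
    have : h (emb r) = r * (u : R) := by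
      rw [hembr, map_smul, smul_eq_mul, hu]
    rw [LinearMap.mem_ker.1 hx2] at this
    have hr : r = 0 := by
      have := congrArg (· * (↑u⁻¹ : R)) this.symm
      simpa [mul_assoc] using this
    simp [hr]
  -- emb is surjective
  have hsurj : Function.Surjective emb := by
    intro e
    refine ⟨h e * (↑u⁻¹ : R), ?_⟩
    have hz : e - (h e * (↑u⁻¹ : R)) • emb 1 ∈ LinearMap.ker h := by
      rw [LinearMap.mem_ker, map_sub, map_smul, smul_eq_mul, ← hu, mul_assoc, u.inv_mul, mul_one,
        sub_self]
    rw [hker, Submodule.mem_bot, sub_eq_zero] at hz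
    rw [hembr, ← hz]
  -- transfer injectivity along the equivalence
  let eqv : R ≃ₗ[R] E := LinearEquiv.ofBijective emb ⟨hinj, hsurj⟩
  constructor
  intro X Y _ _ _ _ f hf g'
  obtain ⟨h', hh'⟩ := hE.out f hf (eqv.toLinearMap.comp g')
  exact ⟨eqv.symm.toLinearMap.comp h', fun x => by
    simp [LinearMap.comp_apply, hh' x]⟩
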